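/- Let T be a monad on a category C and x an object of C. Then T-algebra structures on x correspond bijectively to liftings of the monad T to a monad T̃ on the slice category C/x (compatible with the forgetful functor C/x → C, including units and multiplications). Under this correspondence, a T-algebra structure (x, m : Tx → x) yields the lifted monad T̃(f : y → x) = (m ∘ T(f) : Ty → x). -/

import Mathlib

open CategoryTheory

universe v u

variable {C : Type u} [Category.{v} C]

/-- A lifting of a monad `T` on `C` to the slice category `C/x`: a monad on `C/x`
together with an isomorphism commuting with the forgetful functor `C/x → C`, which is
moreover compatible with the units and multiplications. -/
structure MonadLifting (T : Monad C) (x : C) where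
  /-- The lifted monad on the slice category. -/
  L : Monad (Over x)
  /-- The compatibility isomorphism with the forgetful functor. -/
  iso : L.toFunctor ⋙ Over.forget x ≅ Over.forget x ⋙ T.toFunctor
  /-- Compatibility with the units. -/
  unit_comm : ∀ f : Over x,
    (Over.forget x).map (L.η.app f) ≫ iso.hom.app f = T.η.app f.left
  /-- Compatibility with the multiplications. -/
  mul_comm : ∀ f : Over x,
    (Over.forget x).map (L.μ.app f) ≫ iso.hom.app f =
      iso.hom.app (L.obj f) ≫ (T : C ⥤ C).map (iso.hom.app f) ≫ T.μ.app f.left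

def liftFunctor (T : Monad C) {x : C} (m : (T : C ⥤ C).obj x ⟶ x) : Over x ⥤ Over x where
  obj f := Over.mk ((T : C ⥤ C).map f.hom ≫ m)
  map {f g} u := Over.homMk ((T : C ⥤ C).map u.left) (by
    dsimp
    rw [← Functor.map_comp_assoc, Over.w])
  map_id f := by ext; simp
  map_comp u v := by ext; simp

def liftMonad (T : Monad C) {x : C} (m : (T : C ⥤ C).obj x ⟶ x)
    (h1 : T.η.app x ≫ m = 𝟙 x)
    (h2 : T.μ.app x ≫ m = (T : C ⥤ C).map m ≫ m) : Monad (Over x) where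
  toFunctor := liftFunctor T m
  η := { app := fun f => Over.homMk (T.η.app f.left) (by
            dsimp [liftFunctor]
            have := T.η.naturality f.hom
            dsimp at this
            rw [← Category.assoc, ← this, Category.assoc, h1, Category.comp_id])
         naturality := by
            intros f g u; ext
            simp only [liftFunctor, Over.comp_left, Over.homMk_left]
            exact T.η.naturality u.left }
  μ := { app := fun f => Over.homMk (T.μ.app f.left) (by
            dsimp [liftFunctor]
            rw [Functor.map_comp, Category.assoc, ← h2]
            have := T.μ.naturality f.hom
            dsimp at this
            rw [← Category.assoc, ← this, Category.assoc])
         naturality := by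
            intros f g u; ext
            simp only [liftFunctor, Over.comp_left, Over.homMk_left]
            exact T.μ.naturality u.left }
  left_unit f := by ext; exact T.left_unit f.left
  right_unit f := by ext; exact T.right_unit f.left
  assoc f := by ext; exact T.assoc f.left

/-- `T`-algebra structures on an object `x` correspond bijectively to liftings of the
monad `T` to the slice category `C/x`; under the correspondence, the algebra
structure `m : T x ⟶ x` yields the lifted monad `f ↦ (m ∘ T f : T y ⟶ x)`. -/
theorem algebra_structures_correspond_to_monad_liftings (T : Monad C) (x : C) :
    (∀ m : (T : C ⥤ C).obj x ⟶ x,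
      T.η.app x ≫ m = 𝟙 x →
      T.μ.app x ≫ m = (T : C ⥤ C).map m ≫ m →
        ∃ L : MonadLifting T x, ∀ f : Over x,
          (L.L.obj f).hom = L.iso.hom.app f ≫ (T : C ⥤ C).map f.hom ≫ m) ∧
    (∀ L : MonadLifting T x,
      ∃! m : (T : C ⥤ C).obj x ⟶ x,
        T.η.app x ≫ m = 𝟙 x ∧
        T.μ.app x ≫ m = (T : C ⥤ C).map m ≫ m ∧
        ∀ f : Over x,
          (L.L.obj f).hom = L.iso.hom.app f ≫ (T : C ⥤ C).map f.hom ≫ m) := by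
  constructor
  · intro m h1 h2
    refine ⟨⟨liftMonad T m h1 h2,
      NatIso.ofComponents (fun f => Iso.refl _) (by
        intros f g u
        simp [liftMonad, liftFunctor]), ?_, ?_⟩, ?_⟩
    · intro f; exact Category.comp_id _
    · intro f
      show T.μ.app f.left ≫ 𝟙 _ = 𝟙 _ ≫ (T : C ⥤ C).map (𝟙 _) ≫ T.μ.app f.left
      simp
    · intro f; exact (Category.id_comp _).symm
  · intro L
    have hme0 : ∀ f : Over x, L.iso.hom.app f ≫ (L.iso.inv.app f ≫ (L.L.obj f).hom)
        = (L.L.obj f).hom := by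
      intro f; exact Iso.hom_inv_id_app_assoc L.iso f _
    set m : (T : C ⥤ C).obj x ⟶ x :=
      L.iso.inv.app (Over.mk (𝟙 x)) ≫ (L.L.obj (Over.mk (𝟙 x))).hom with hm
    have hme : L.iso.hom.app (Over.mk (𝟙 x)) ≫ m = (L.L.obj (Over.mk (𝟙 x))).hom :=
      hme0 _
    have hall : ∀ f : Over x,
        (L.L.obj f).hom = L.iso.hom.app f ≫ (T : C ⥤ C).map f.hom ≫ m := by
      intro f
      let φ : f ⟶ Over.mk (𝟙 x) := Over.homMk f.hom (by simp)
      have hnat := L.iso.hom.naturality φ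
      dsimp at hnat
      have hw := Over.w (L.L.map φ)
      erw [← hw, ← hme, ← Category.assoc, hnat, Category.assoc]
      rfl
    have hunit : T.η.app x ≫ m = 𝟙 x := by
      have h := L.unit_comm (Over.mk (𝟙 x))
      dsimp at h
      erw [← h, Category.assoc, hme, Over.w]
      rfl
    have hmul : T.μ.app x ≫ m = (T : C ⥤ C).map m ≫ m := by
      have h := L.mul_comm (Over.mk (𝟙 x))
      dsimp at h
      have key : L.iso.hom.app (L.L.obj (Over.mk (𝟙 x))) ≫
          (T : C ⥤ C).map (L.iso.hom.app (Over.mk (𝟙 x))) ≫ T.μ.app x ≫ m =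
          L.iso.hom.app (L.L.obj (Over.mk (𝟙 x))) ≫
          (T : C ⥤ C).map (L.iso.hom.app (Over.mk (𝟙 x))) ≫
          (T : C ⥤ C).map m ≫ m := by
        calc @Eq ((L.L.obj (L.L.obj (Over.mk (𝟙 x)))).left ⟶ x)
              (L.iso.hom.app (L.L.obj (Over.mk (𝟙 x))) ≫
              (T : C ⥤ C).map (L.iso.hom.app (Over.mk (𝟙 x))) ≫ T.μ.app x ≫ m)
              (((L.L.μ.app (Over.mk (𝟙 x))).left ≫ L.iso.hom.app (Over.mk (𝟙 x))) ≫ m) := by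
              exact ((congrArg (· ≫ m) h).trans (by erw [Category.assoc, Category.assoc]; rfl)).symm
          _ = (L.L.μ.app (Over.mk (𝟙 x))).left ≫ (L.L.obj (Over.mk (𝟙 x))).hom := by
              erw [Category.assoc, hme]
          _ = (L.L.obj (L.L.obj (Over.mk (𝟙 x)))).hom := Over.w _
          @Eq ((L.L.obj (L.L.obj (Over.mk (𝟙 x)))).left ⟶ x) _ (L.iso.hom.app (L.L.obj (Over.mk (𝟙 x))) ≫
              (T : C ⥤ C).map ((L.L.obj (Over.mk (𝟙 x))).hom) ≫ m) := hall _
          @Eq ((L.L.obj (L.L.obj (Over.mk (𝟙 x)))).left ⟶ x) _ (L.iso.hom.app (L.L.obj (Over.mk (𝟙 x))) ≫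
              (T : C ⥤ C).map (L.iso.hom.app (Over.mk (𝟙 x))) ≫
              (T : C ⥤ C).map m ≫ m) := by
              erw [← hme, Functor.map_comp, Category.assoc]
      have key2 := (cancel_epi (L.iso.hom.app (L.L.obj (Over.mk (𝟙 x))))).mp key
      exact (cancel_epi ((T : C ⥤ C).map (L.iso.hom.app (Over.mk (𝟙 x))))).mp key2
    refine ⟨m, ⟨hunit, hmul, hall⟩, ?_⟩
    intro m' ⟨_, _, hall'⟩
    have h := hall' (Over.mk (𝟙 x))
    simp only [Over.mk_hom, CategoryTheory.Functor.map_id, Category.id_comp] at h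
    have : L.iso.hom.app (Over.mk (𝟙 x)) ≫ m' = L.iso.hom.app (Over.mk (𝟙 x)) ≫ m := by
      rw [hme, h]
      simp
    exact (cancel_epi (L.iso.hom.app (Over.mk (𝟙 x)))).mp this
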